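/- For every F-algebra automorphism f of A = M₃(F), the map f^•: J → J defined by f^•(a,b,c) := (f(a), f(b), f(c)) is an algebra automorphism of the Tits algebra J, and the assignment f ↦ f^• is an injective group homomorphism from the automorphism group of M₃(F) to the automorphism group of J. -/

import Mathlib

noncomputable section

open Matrix
open scoped BigOperators

variable (F : Type*) [Field F] [IsAlgClosed F] [CharZero F]

/-- `A = M₃(F)`. -/
abbrev MatF := Matrix (Fin 3) (Fin 3) F

/-- Second coefficient of the generic minimal polynomial: `Q(x) = ((Tr x)² − Tr(x²))/2`. -/
def qA (x : MatF F) : F := ((Matrix.trace x) ^ 2 - Matrix.trace (x * x)) / 2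

/-- The adjoint `x^♯ = x² − Tr(x)·x + Q(x)·1`. -/
def sharp (x : MatF F) : MatF F := x * x - Matrix.trace x • x + qA F x • (1 : MatF F)

/-- The cross product `x × y = (x+y)^♯ − x^♯ − y^♯`. -/
def crossA (x y : MatF F) : MatF F := sharp F (x + y) - sharp F x - sharp F y

/-- `x* = (1/2)Tr(x)·1 − (1/2)x`. -/
def starA (x : MatF F) : MatF F :=
  (1/2 : F) • (Matrix.trace x) • (1 : MatF F) - (1/2 : F) • x

/-- The Jordan product `x ∘ y = (xy + yx)/2`. -/
def circA (x y : MatF F) : MatF F := (1/2 : F) • (x * y + y * x)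

/-- The underlying space of the Tits construction of the Albert algebra: `A × A × A`. -/
abbrev TitsJ := MatF F × MatF F × MatF F

/-- The product of the Tits algebra `J`. -/
def tmul (u v : TitsJ F) : TitsJ F :=
  ( circA F u.1 v.1 + starA F (u.2.1 * v.2.2) + starA F (v.2.1 * u.2.2),
    starA F u.1 * v.2.1 + starA F v.1 * u.2.1 + (1/2 : F) • crossA F u.2.2 v.2.2,
    v.2.2 * starA F u.1 + u.2.2 * starA F v.1 + (1/2 : F) • crossA F u.2.1 v.2.1 )

/-- The extension `f^•(a,b,c) = (f a, f b, f c)` of an automorphism of `M₃(F)` to `J`,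
as a linear equivalence of `J`. -/
def fbullet (f : MatF F ≃ₐ[F] MatF F) : TitsJ F ≃ₗ[F] TitsJ F :=
  (f.toLinearEquiv).prodCongr ((f.toLinearEquiv).prodCongr (f.toLinearEquiv))


set_option linter.unusedSectionVars false

lemma trace_f (f : MatF F ≃ₐ[F] MatF F) (x : MatF F) :
    Matrix.trace (f x) = Matrix.trace x := by
  have comm : ∀ a b : MatF F, Matrix.trace (f (a * b)) = Matrix.trace (f (b * a)) := by
    intro a b
    rw [_root_.map_mul, _root_.map_mul, Matrix.trace_mul_comm]
  have hdiag : ∀ i : Fin 3, Matrix.trace (f (Matrix.single i i (1:F)))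
      = Matrix.trace (f (Matrix.single (0:Fin 3) (0:Fin 3) (1:F))) := by
    intro i
    have h1 : Matrix.single i i (1:F)
        = Matrix.single i (0:Fin 3) (1:F) * Matrix.single (0:Fin 3) i (1:F) := by
      rw [Matrix.single_mul_single_same, one_mul]
    have h2 : Matrix.single (0:Fin 3) i (1:F) * Matrix.single i (0:Fin 3) (1:F)
        = Matrix.single (0:Fin 3) (0:Fin 3) (1:F) := by
      rw [Matrix.single_mul_single_same, one_mul]
    rw [h1, comm, h2]
  have hone : Matrix.trace (f (Matrix.single (0:Fin 3) (0:Fin 3) (1:F))) = 1 := by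
    have hsum : (1 : MatF F) = ∑ i : Fin 3, Matrix.single i i (1:F) := by
      ext i j
      simp only [Matrix.sum_apply]
      by_cases h : i = j
      · subst h
        rw [Finset.sum_eq_single i (fun k _ hk =>
          Matrix.single_apply_of_ne _ _ _ _ _ (fun ⟨h1, _⟩ => hk h1)) (by simp)]
        simp [Matrix.one_apply]
      · rw [Finset.sum_eq_zero (fun k _ => Matrix.single_apply_of_ne _ _ _ _ _ (fun ⟨h1, h2⟩ => h (h1.symm.trans h2)))]
        simp [Matrix.one_apply, h]
    have h3 := congrArg (fun m => Matrix.trace (f m)) hsum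
    simp only [_root_.map_one, map_sum, Matrix.trace_one, Matrix.trace_sum] at h3
    rw [Finset.sum_congr rfl (fun i _ => hdiag i)] at h3
    rw [Fin.sum_univ_three] at h3
    simp only [Fintype.card_fin, Nat.cast_ofNat] at h3
    linear_combination (-1/3 : F) * h3
  have hoff : ∀ i j : Fin 3, i ≠ j → Matrix.trace (f (Matrix.single i j (1:F))) = 0 := by
    intro i j hij
    have h1 : Matrix.single i j (1:F) = Matrix.single i i (1:F) * Matrix.single i j (1:F) := by
      rw [Matrix.single_mul_single_same, one_mul]
    have h2 : Matrix.single i j (1:F) * Matrix.single i i (1:F) = (0 : MatF F) :=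
      Matrix.single_mul_single_of_ne (c := (1:F)) (i := i) (j := j) (k := i) (Ne.symm hij) (1:F)
    rw [h1, comm, h2, map_zero, Matrix.trace_zero]
  have key : ∀ i j : Fin 3, Matrix.trace (f (Matrix.single i j (1:F)))
      = if i = j then 1 else 0 := by
    intro i j
    by_cases h : i = j
    · subst h; rw [hdiag, hone]; simp
    · rw [hoff i j h]; simp [h]
  nth_rewrite 1 [Matrix.matrix_eq_sum_single x]
  simp only [map_sum, Matrix.trace_sum]
  have hsmul : ∀ i j : Fin 3, Matrix.single i j (x i j) = x i j • Matrix.single i j (1:F) := by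
    intro i j; rw [Matrix.smul_single, smul_eq_mul, mul_one]
  calc ∑ i : Fin 3, ∑ j : Fin 3, Matrix.trace (f (Matrix.single i j (x i j)))
      = ∑ i : Fin 3, ∑ j : Fin 3, x i j * (if i = j then 1 else 0) := by
        refine Finset.sum_congr rfl fun i _ => Finset.sum_congr rfl fun j _ => ?_
        rw [hsmul, _root_.map_smul, Matrix.trace_smul, key, smul_eq_mul]
    _ = Matrix.trace x := by
        simp [Matrix.trace, Matrix.diag, mul_ite, Finset.sum_ite_eq']

lemma qA_f (f : MatF F ≃ₐ[F] MatF F) (x : MatF F) : qA F (f x) = qA F x := by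
  unfold qA
  rw [trace_f, ← _root_.map_mul, trace_f]

lemma sharp_f (f : MatF F ≃ₐ[F] MatF F) (x : MatF F) : sharp F (f x) = f (sharp F x) := by
  unfold sharp
  rw [map_add, map_sub, _root_.map_mul, _root_.map_smul, _root_.map_smul, _root_.map_one,
    trace_f, qA_f]

lemma crossA_f (f : MatF F ≃ₐ[F] MatF F) (x y : MatF F) :
    crossA F (f x) (f y) = f (crossA F x y) := by
  unfold crossA
  rw [map_sub, map_sub, ← map_add f, sharp_f, sharp_f, sharp_f]

lemma starA_f (f : MatF F ≃ₐ[F] MatF F) (x : MatF F) : starA F (f x) = f (starA F x) := by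
  unfold starA
  rw [map_sub, _root_.map_smul, _root_.map_smul, _root_.map_smul, _root_.map_one, trace_f]

lemma circA_f (f : MatF F ≃ₐ[F] MatF F) (x y : MatF F) :
    circA F (f x) (f y) = f (circA F x y) := by
  unfold circA
  rw [_root_.map_smul, map_add, _root_.map_mul, _root_.map_mul]


lemma fbullet_apply (f : MatF F ≃ₐ[F] MatF F) (u : TitsJ F) :
    fbullet F f u = (f u.1, f u.2.1, f u.2.2) := rfl


/-- for every `F`-algebra automorphism `f` of `M₃(F)`, the map
`f^•(a,b,c) = (f a, f b, f c)` is an algebra automorphism of the Tits algebra `J`, and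
`f ↦ f^•` is an injective group homomorphism from `Aut(M₃(F))` into `Aut(J)`. -/
theorem tits_fbullet_injective_hom :
    (∀ (f : MatF F ≃ₐ[F] MatF F) (x y : TitsJ F),
        fbullet F f (tmul F x y) = tmul F (fbullet F f x) (fbullet F f y)) ∧
    (∀ f g : MatF F ≃ₐ[F] MatF F,
        fbullet F (f.trans g) = (fbullet F f).trans (fbullet F g)) ∧
    Function.Injective (fbullet F) := by
  refine ⟨?_, ?_, ?_⟩
  · intro f x y
    rw [fbullet_apply, fbullet_apply, fbullet_apply]
    unfold tmul
    refine Prod.ext ?_ (Prod.ext ?_ ?_) <;> simp only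
    · rw [map_add, map_add, circA_f, ← _root_.map_mul f, ← _root_.map_mul f, starA_f, starA_f]
    · rw [map_add, map_add, _root_.map_mul, _root_.map_mul, _root_.map_smul,
        starA_f, starA_f, crossA_f]
    · rw [map_add, map_add, _root_.map_mul, _root_.map_mul, _root_.map_smul,
        starA_f, starA_f, crossA_f]
  · intro f g
    exact LinearEquiv.ext fun u => rfl
  · intro f g h
    refine AlgEquiv.ext fun x => ?_
    have := congrArg (fun e : TitsJ F ≃ₗ[F] TitsJ F => (e ((x, 0, 0) : TitsJ F)).1) h
    simpa [fbullet_apply] using this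
end
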